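/- Area anomaly of the rotating-drift walk: fix p ∈ (0, 1) and let ζ_1, ζ_2, ζ_3, ζ_4 be independent random variables with P(ζ_k = 1) = p and P(ζ_k = −1) = 1 − p. Define the ℝ²-valued walk X_0 = 0, X_n = X_{n−1} + Δx_n for 1 ≤ n ≤ 4, with increments Δx_1 = (0, ζ_1), Δx_2 = (−ζ_2, 0), Δx_3 = (0, −ζ_3), Δx_4 = (ζ_4, 0) (i.e., Δx_n is i^n ζ_n under the identification ℝ² ≅ ℂ). Then (1/4) E[A_{0,4}(X)] = ((2p − 1)² / 4) · [[0, 1], [−1, 0]]; in particular this matrix is nonzero whenever p ≠ 1/2. -/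

import Mathlib

open Matrix Finset MeasureTheory ProbabilityTheory

/-- `tens a b` is the `2 × 2` matrix `(a i * b j)_{i,j}`, i.e. the tensor product `a ⊗ b`. -/
noncomputable def tens {d : ℕ} (a b : Fin d → ℝ) : Matrix (Fin d) (Fin d) ℝ :=
  Matrix.of fun i j => a i * b j

/-- The increment `Δx_k = x_k − x_{k−1}` of a sequence `x : ℕ → ℝ^d`. -/
noncomputable def inc {d : ℕ} (x : ℕ → Fin d → ℝ) (k : ℕ) : Fin d → ℝ :=
  x k - x (k - 1)

/-- The discrete signed area
`A_{m,n}(x) = (1/2) Σ_{m+1 ≤ k < ℓ ≤ n} (Δx_k ⊗ Δx_ℓ − Δx_ℓ ⊗ Δx_k)`. -/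
noncomputable def sarea {d : ℕ} (x : ℕ → Fin d → ℝ) (m n : ℕ) : Matrix (Fin d) (Fin d) ℝ :=
  (1 / 2 : ℝ) • ∑ k ∈ Finset.Icc (m + 1) n, ∑ l ∈ Finset.Icc (k + 1) n,
    (tens (inc x k) (inc x l) - tens (inc x l) (inc x k))

lemma sarea_eval (a b c e : ℝ) (x : ℕ → Fin 2 → ℝ) (h0 : x 0 = 0)
    (h1 : x 1 = x 0 + ![0, a]) (h2 : x 2 = x 1 + ![-b, 0])
    (h3 : x 3 = x 2 + ![0, -c]) (h4 : x 4 = x 3 + ![e, 0]) (i j : Fin 2) :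
    sarea x 0 4 i j = ((1/2) * (!![0,1;-1,0] i j)) * (a*b - a*e + b*c + c*e) := by
  have e1 : Finset.Icc (0 + 1) 4 = {1,2,3,4} := rfl
  rw [sarea, e1, Finset.sum_insert (by decide), Finset.sum_insert (by decide),
    Finset.sum_insert (by decide), Finset.sum_singleton,
    show Finset.Icc (1 + 1) 4 = {2,3,4} from rfl,
    show Finset.Icc (2 + 1) 4 = {3,4} from rfl,
    show Finset.Icc (3 + 1) 4 = {4} from rfl,
    show Finset.Icc (4 + 1) 4 = ∅ from rfl,
    Finset.sum_insert (by decide), Finset.sum_insert (by decide), Finset.sum_insert (by decide),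
    Finset.sum_singleton, Finset.sum_singleton, Finset.sum_empty]
  fin_cases i <;> fin_cases j <;>
    simp [inc, tens, h0, h1, h2, h3, h4] <;> ring

/-- Area anomaly of the rotating-drift walk: for i.i.d.-type signs `ζ_1, ..., ζ_4` with
`P(ζ_k = 1) = p = 1 − P(ζ_k = −1)` and the walk `X_0 = 0` with increments
`Δx_1 = (0, ζ_1)`, `Δx_2 = (−ζ_2, 0)`, `Δx_3 = (0, −ζ_3)`, `Δx_4 = (ζ_4, 0)`, one has
`(1/4) E[A_{0,4}(X)] = ((2p − 1)²/4) · [[0,1],[−1,0]]`, which is nonzero when `p ≠ 1/2`. -/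
theorem rotating_drift_area_anomaly {Ω : Type*} [MeasurableSpace Ω]
    (P : Measure Ω) [IsProbabilityMeasure P] (p : ℝ) (hp0 : 0 < p) (hp1 : p < 1)
    (ζ : Fin 4 → Ω → ℝ) (hζmeas : ∀ k, Measurable (ζ k))
    (hindep : iIndepFun ζ P)
    (hone : ∀ k, P {ω | ζ k ω = 1} = ENNReal.ofReal p)
    (hmone : ∀ k, P {ω | ζ k ω = -1} = ENNReal.ofReal (1 - p))
    (X : ℕ → Ω → Fin 2 → ℝ)
    (hX0 : ∀ ω, X 0 ω = 0)
    (hX1 : ∀ ω, X 1 ω = X 0 ω + ![0, ζ 0 ω])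
    (hX2 : ∀ ω, X 2 ω = X 1 ω + ![-(ζ 1 ω), 0])
    (hX3 : ∀ ω, X 3 ω = X 2 ω + ![0, -(ζ 2 ω)])
    (hX4 : ∀ ω, X 4 ω = X 3 ω + ![ζ 3 ω, 0]) :
    (Matrix.of fun i j => (1 / 4 : ℝ) * ∫ ω, sarea (fun n => X n ω) 0 4 i j ∂P) =
      ((2 * p - 1) ^ 2 / 4) • !![0, 1; -1, 0] ∧
    (p ≠ 1 / 2 →
      ((2 * p - 1) ^ 2 / 4) • (!![0, 1; -1, 0] : Matrix (Fin 2) (Fin 2) ℝ) ≠ 0) := by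
  -- measurable sets
  set A : Fin 4 → Set Ω := fun k => {ω | ζ k ω = 1} with hA
  set B : Fin 4 → Set Ω := fun k => {ω | ζ k ω = -1} with hB
  have hAm : ∀ k, MeasurableSet (A k) := fun k => hζmeas k (measurableSet_singleton 1)
  have hBm : ∀ k, MeasurableSet (B k) := fun k => hζmeas k (measurableSet_singleton (-1))
  have hdisj : ∀ k, Disjoint (A k) (B k) := by
    intro k
    rw [Set.disjoint_left]
    intro ω h1 h2
    simp only [hA, hB, Set.mem_setOf_eq] at h1 h2
    rw [h1] at h2; norm_num at h2
  have hunion : ∀ k, P (A k ∪ B k) = 1 := by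
    intro k
    rw [measure_union (hdisj k) (hBm k), hone k, hmone k,
      ← ENNReal.ofReal_add hp0.le (by linarith)]
    norm_num
  have hae : ∀ k, ∀ᵐ ω ∂P, ζ k ω = 1 ∨ ζ k ω = -1 := by
    intro k
    have h0 : P ((A k ∪ B k)ᶜ) = 0 :=
      (prob_compl_eq_zero_iff ((hAm k).union (hBm k))).2 (hunion k)
    have hset : {ω | ¬(ζ k ω = 1 ∨ ζ k ω = -1)} = (A k ∪ B k)ᶜ := by
      ext ω; simp [hA, hB, Set.mem_setOf_eq]
    rw [ae_iff, hset]
    exact h0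
  -- integrability
  have hint : ∀ k, Integrable (ζ k) P := by
    intro k
    refine (integrable_const (1:ℝ)).mono' (hζmeas k).aestronglyMeasurable ?_
    filter_upwards [hae k] with ω h
    rcases h with h | h <;> simp [h]
  have hintmul : ∀ k l, Integrable (fun ω => ζ k ω * ζ l ω) P := by
    intro k l
    refine (integrable_const (1:ℝ)).mono'
      ((hζmeas k).mul (hζmeas l)).aestronglyMeasurable ?_
    filter_upwards [hae k, hae l] with ω h h'
    rcases h with h | h <;> rcases h' with h' | h' <;> simp [h, h']
  -- expectation of a single sign
  have hE : ∀ k, ∫ ω, ζ k ω ∂P = 2 * p - 1 := by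
    intro k
    have hg : ζ k =ᵐ[P] fun ω =>
        (A k).indicator (fun _ => (1:ℝ)) ω + (B k).indicator (fun _ => (-1:ℝ)) ω := by
      filter_upwards [hae k] with ω h
      rcases h with h | h
      · have hωA : ω ∈ A k := h
        have hωB : ω ∉ B k := by simp only [hB, Set.mem_setOf_eq, h]; norm_num
        simp [Set.indicator_of_mem hωA, Set.indicator_of_notMem hωB, h]
      · have hωB : ω ∈ B k := h
        have hωA : ω ∉ A k := by simp only [hA, Set.mem_setOf_eq, h]; norm_num
        simp [Set.indicator_of_mem hωB, Set.indicator_of_notMem hωA, h]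
    rw [integral_congr_ae hg, integral_add
      ((integrable_const (1:ℝ)).indicator (hAm k))
      ((integrable_const (-1:ℝ)).indicator (hBm k)),
      integral_indicator_const (1:ℝ) (hAm k), integral_indicator_const (-1:ℝ) (hBm k),
      Measure.real, Measure.real, hone k, hmone k, ENNReal.toReal_ofReal hp0.le,
      ENNReal.toReal_ofReal (by linarith : (0:ℝ) ≤ 1 - p)]
    simp; ring
  have hEmul : ∀ k l, k ≠ l → ∫ ω, ζ k ω * ζ l ω ∂P = (2 * p - 1) ^ 2 := by
    intro k l hkl
    have := IndepFun.integral_mul_eq_mul_integral (hindep.indepFun hkl) (hint k).1 (hint l).1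
    rw [show (fun ω => ζ k ω * ζ l ω) = ζ k * ζ l from rfl, this, hE k, hE l]; ring
  constructor
  · ext i j
    have hptwise : ∀ ω, sarea (fun n => X n ω) 0 4 i j =
        ((1/2) * (!![0,1;-1,0] i j)) *
          (ζ 0 ω * ζ 1 ω - ζ 0 ω * ζ 3 ω + ζ 1 ω * ζ 2 ω + ζ 2 ω * ζ 3 ω) := by
      intro ω
      exact sarea_eval (ζ 0 ω) (ζ 1 ω) (ζ 2 ω) (ζ 3 ω) (fun n => X n ω)
        (hX0 ω) (hX1 ω) (hX2 ω) (hX3 ω) (hX4 ω) i j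
    have hS : ∫ ω, (ζ 0 ω * ζ 1 ω - ζ 0 ω * ζ 3 ω + ζ 1 ω * ζ 2 ω + ζ 2 ω * ζ 3 ω) ∂P =
        2 * (2 * p - 1) ^ 2 := by
      have I1 : Integrable (fun ω => ζ 0 ω * ζ 1 ω - ζ 0 ω * ζ 3 ω) P :=
        (hintmul 0 1).sub (hintmul 0 3)
      have I2 : Integrable (fun ω => ζ 0 ω * ζ 1 ω - ζ 0 ω * ζ 3 ω + ζ 1 ω * ζ 2 ω) P :=
        I1.add (hintmul 1 2)
      rw [integral_add I2 (hintmul 2 3), integral_add I1 (hintmul 1 2),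
        integral_sub (hintmul 0 1) (hintmul 0 3),
        hEmul 0 1 (by decide), hEmul 0 3 (by decide), hEmul 1 2 (by decide),
        hEmul 2 3 (by decide)]
      ring
    simp only [Matrix.of_apply]
    rw [show (fun ω => sarea (fun n => X n ω) 0 4 i j) = fun ω =>
        ((1/2) * (!![0,1;-1,0] i j)) *
          (ζ 0 ω * ζ 1 ω - ζ 0 ω * ζ 3 ω + ζ 1 ω * ζ 2 ω + ζ 2 ω * ζ 3 ω)
      from funext hptwise, integral_const_mul, hS, Matrix.smul_apply, smul_eq_mul]
    ring
  · intro hp hcontra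
    have hc : (2 * p - 1) ≠ 0 := fun h0 => hp (by linarith)
    have h01 := congrFun (congrFun hcontra 0) 1
    simp [Matrix.smul_apply] at h01
    exact hc (by nlinarith [h01])
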